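/- For a real parameter a, define polynomials Q_m(a,·) in z by Q_0(a,z) = 1/2 and, for m ≥ 1, Q_m(a,z) = (m+1)·a·z·Q_{m−1}(a,z) + z·(1 − a·z)·∂_z Q_{m−1}(a,z). Then for every integer m ≥ 0 and every real z with |z| < 1, ∑_{n=0}^∞ 4^n n^m z^n/((2n+1)·C_n) = ∫_{−1}^1 Q_m(1−x^2, z) / (1 − z(1−x^2))^{m+2} dx. -/

import Mathlib

open Polynomial

/-- For a real parameter `a`, the polynomial `Q_m(a,·)` in `z` defined by
`Q_0(a,z) = 1/2` and, for `m ≥ 1`,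
`Q_m(a,z) = (m+1)·a·z·Q_{m-1}(a,z) + z·(1-a·z)·∂_z Q_{m-1}(a,z)`. -/
noncomputable def catalanQ (a : ℝ) : ℕ → Polynomial ℝ
  | 0 => C (1 / 2)
  | m + 1 =>
      C ((m : ℝ) + 2) * C a * X * catalanQ a m
        + X * (1 - C a * X) * derivative (catalanQ a m)

open Nat MeasureTheory

lemma catalanQ_comp (a : ℝ) (m : ℕ) : catalanQ a m = (catalanQ 1 m).comp (C a * X) := by
  induction m with
  | zero => simp [catalanQ]
  | succ m ih =>
    rw [show catalanQ a (m+1) = C ((m : ℝ) + 2) * C a * X * catalanQ a m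
        + X * (1 - C a * X) * derivative (catalanQ a m) from rfl,
      show catalanQ 1 (m+1) = C ((m : ℝ) + 2) * C 1 * X * catalanQ 1 m
        + X * (1 - C 1 * X) * derivative (catalanQ 1 m) from rfl, ih]
    simp only [derivative_comp, add_comp, mul_comp, sub_comp, one_comp, X_comp, C_comp,
      derivative_mul, derivative_C, derivative_X, map_one, one_mul, zero_mul, zero_add, mul_one]
    ring

lemma eval_catalanQ (a z : ℝ) (m : ℕ) :
    eval z (catalanQ a m) = eval (a * z) (catalanQ 1 m) := by
  rw [catalanQ_comp, eval_comp]; simp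

lemma hasSum_aux : ∀ (m : ℕ) (w : ℝ), |w| < 1 →
    HasSum (fun n : ℕ => ((n : ℝ) + 1) * (n : ℝ) ^ m * w ^ n)
      (2 * eval w (catalanQ 1 m) / (1 - w) ^ (m + 2)) := by
  intro m
  induction m with
  | zero =>
    intro w hw
    have hw' : ‖w‖ < 1 := by rwa [Real.norm_eq_abs]
    have h1w : (1 : ℝ) - w ≠ 0 := by
      have : w < 1 := lt_of_le_of_lt (le_abs_self w) hw
      linarith
    have h1 := hasSum_coe_mul_geometric_of_norm_lt_one hw'
    have h2 := hasSum_geometric_of_norm_lt_one hw'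
    have h := h1.add h2
    have : (fun n : ℕ => (n : ℝ) * w ^ n + w ^ n)
        = fun n : ℕ => ((n : ℝ) + 1) * (n : ℝ) ^ 0 * w ^ n := by
      funext n; ring
    rw [this] at h
    convert h using 1
    show 2 * eval w (C (1/2 : ℝ)) / (1 - w) ^ 2 = _
    rw [eval_C]
    field_simp
    ring
    rfl
  | succ m ih =>
    intro w hw
    set r : ℝ := (1 + |w|) / 2 with hr_def
    have hr0 : 0 < r := by positivity
    have hwr : |w| < r := by rw [hr_def]; linarith
    have hr1 : r < 1 := by rw [hr_def]; linarith
    have hrnorm : ‖r‖ < 1 := by rw [Real.norm_eq_abs, abs_of_pos hr0]; exact hr1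
    have h1w : (1 : ℝ) - w ≠ 0 := by
      have : w < 1 := lt_of_le_of_lt (le_abs_self w) hw
      linarith
    set t : Set ℝ := Metric.ball (0 : ℝ) r with ht_def
    have hmem : ∀ y : ℝ, y ∈ t → |y| < r := by
      intro y hy
      simpa [ht_def, Real.dist_eq] using hy
    have hwt : w ∈ t := by simp [ht_def, Real.dist_eq, hwr]
    -- the series of derivatives
    set g : ℕ → ℝ → ℝ := fun n y => ((n : ℝ) + 1) * (n : ℝ) ^ m * y ^ n with hg_def
    set g' : ℕ → ℝ → ℝ := fun n y => ((n : ℝ) + 1) * (n : ℝ) ^ (m + 1) * y ^ (n - 1) with hg'_def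
    set u : ℕ → ℝ := fun n => ((n : ℝ) + 1) ^ (m + 2) * r ^ n / r with hu_def
    have hu : Summable u := by
      have S : Summable (fun n : ℕ => (n : ℝ) ^ (m + 2) * r ^ n) :=
        summable_pow_mul_geometric_of_norm_lt_one (m + 2) hrnorm
      have S' : Summable (fun n : ℕ => ((n : ℝ) + 1) ^ (m + 2) * r ^ (n + 1)) := by
        have := (summable_nat_add_iff 1).2 S
        refine this.congr fun n => ?_
        push_cast; ring
      have := S'.mul_left (1 / r ^ 2)
      refine this.congr fun n => ?_
      rw [hu_def]
      field_simp
      ring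
    have hg : ∀ (n : ℕ) (y : ℝ), y ∈ t → HasDerivAt (g n) (g' n y) y := by
      intro n y _
      have := (hasDerivAt_pow n y).const_mul (((n : ℝ) + 1) * (n : ℝ) ^ m)
      convert this using 1
      rfl
      rfl
      rw [hg'_def]
      ring
    have hg' : ∀ (n : ℕ) (y : ℝ), y ∈ t → ‖g' n y‖ ≤ u n := by
      intro n y hy
      have hyr := hmem y hy
      have h1 : ‖g' n y‖ = ((n : ℝ) + 1) * (n : ℝ) ^ (m + 1) * |y| ^ (n - 1) := by
        rw [hg'_def, Real.norm_eq_abs, abs_mul, abs_mul, abs_pow]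
        have : |(n : ℝ) + 1| = (n : ℝ) + 1 := abs_of_pos (by positivity)
        rw [this, abs_pow, Nat.abs_cast]
      rw [h1, hu_def]
      have step1 : ((n : ℝ) + 1) * (n : ℝ) ^ (m + 1) * |y| ^ (n - 1)
          ≤ ((n : ℝ) + 1) ^ (m + 2) * r ^ (n - 1) := by
        have hn1 : (n : ℝ) ^ (m + 1) ≤ ((n : ℝ) + 1) ^ (m + 1) :=
          pow_le_pow_left₀ (Nat.cast_nonneg n) (by linarith) _
        have hy1 : |y| ^ (n - 1) ≤ r ^ (n - 1) :=
          pow_le_pow_left₀ (abs_nonneg y) hyr.le _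
        calc ((n : ℝ) + 1) * (n : ℝ) ^ (m + 1) * |y| ^ (n - 1)
            ≤ ((n : ℝ) + 1) * ((n : ℝ) + 1) ^ (m + 1) * r ^ (n - 1) := by
              apply mul_le_mul
              · exact mul_le_mul_of_nonneg_left hn1 (by positivity)
              · exact hy1
              · positivity
              · positivity
          _ = ((n : ℝ) + 1) ^ (m + 2) * r ^ (n - 1) := by ring
      refine step1.trans ?_
      have : r ^ (n - 1) ≤ r ^ n / r := by
        cases n with
        | zero =>
          simp only [Nat.zero_sub, pow_zero]
          rw [le_div_iff₀ hr0, one_mul]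
          exact hr1.le.trans (by norm_num)
        | succ k =>
          simp only [Nat.succ_sub_one]
          rw [le_div_iff₀ hr0]
          rw [← pow_succ]
      calc ((n : ℝ) + 1) ^ (m + 2) * r ^ (n - 1)
          ≤ ((n : ℝ) + 1) ^ (m + 2) * (r ^ n / r) :=
            mul_le_mul_of_nonneg_left this (by positivity)
        _ = ((n : ℝ) + 1) ^ (m + 2) * r ^ n / r := by ring
    have hg0 : Summable fun n => g n w := (ih w hw).summable
    have key : HasDerivAt (fun y => ∑' n, g n y) (∑' n, g' n w) w :=
      hasDerivAt_tsum_of_isPreconnected hu Metric.isOpen_ball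
        (convex_ball (0 : ℝ) r).isPreconnected hg hg' hwt hg0 hwt
    have hSg' : Summable fun n => g' n w :=
      Summable.of_norm_bounded hu fun n => hg' n w hwt
    -- identify the tsum function with the closed form near w
    set P : Polynomial ℝ := catalanQ 1 m with hP_def
    have hFG : (fun y => ∑' n, g n y) =ᶠ[nhds w]
        (fun y => 2 * eval y P / (1 - y) ^ (m + 2)) := by
      filter_upwards [Metric.isOpen_ball.mem_nhds hwt] with y hy
      exact (ih y ((hmem y hy).trans hr1)).tsum_eq
    -- derivative of the closed form
    have hA : HasDerivAt (fun y : ℝ => 2 * eval y P) (2 * eval w (derivative P)) w :=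
      (P.hasDerivAt w).const_mul 2
    have hB : HasDerivAt (fun y : ℝ => (1 - y) ^ (m + 2))
        ((m + 2 : ℝ) * (1 - w) ^ (m + 1) * (-1)) w := by
      have h1 : HasDerivAt (fun y : ℝ => 1 - y) (-1) w := by
        simpa using (hasDerivAt_id w).const_sub 1
      have := h1.pow (m + 2)
      convert this using 2
      · rfl
      · rfl
      · rfl
      all_goals (push_cast <;> ring_nf)
    have hBne : (1 - w) ^ (m + 2) ≠ 0 := pow_ne_zero _ h1w
    have hG : HasDerivAt (fun y => 2 * eval y P / (1 - y) ^ (m + 2))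
        ((2 * eval w (derivative P) * (1 - w) ^ (m + 2)
          - 2 * eval w P * ((m + 2 : ℝ) * (1 - w) ^ (m + 1) * (-1))) / ((1 - w) ^ (m + 2)) ^ 2)
        w := hA.div hB hBne
    have key2 : HasDerivAt (fun y => 2 * eval y P / (1 - y) ^ (m + 2)) (∑' n, g' n w) w :=
      key.congr_of_eventuallyEq hFG.symm
    have hDval : (∑' n, g' n w) = (2 * eval w (derivative P) * (1 - w) ^ (m + 2)
          - 2 * eval w P * ((m + 2 : ℝ) * (1 - w) ^ (m + 1) * (-1))) / ((1 - w) ^ (m + 2)) ^ 2 :=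
      key2.unique hG
    have hsum : HasSum (fun n => g' n w) (∑' n, g' n w) := hSg'.hasSum
    rw [hDval] at hsum
    have hfinal := hsum.mul_left w
    have hfun : (fun n : ℕ => w * g' n w)
        = fun n : ℕ => ((n : ℝ) + 1) * (n : ℝ) ^ (m + 1) * w ^ n := by
      funext n
      cases n with
      | zero => simp [hg'_def]
      | succ k =>
        rw [hg'_def]
        simp only [Nat.succ_sub_one]
        push_cast
        ring
    rw [hfun] at hfinal
    convert hfinal using 1
    show 2 * eval w (catalanQ 1 (m + 1)) / (1 - w) ^ (m + 1 + 2) = _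
    rw [show catalanQ 1 (m+1) = C ((m : ℝ) + 2) * C 1 * X * catalanQ 1 m
        + X * (1 - C 1 * X) * derivative (catalanQ 1 m) from rfl]
    simp only [eval_add, eval_mul, eval_C, eval_X, eval_sub, eval_one, map_one, one_mul,
      ← hP_def]
    field_simp
    ring
    rfl

lemma prod_fact (n k : ℕ) : n ! * ∏ j ∈ Finset.range k, (n + 1 + j) = (n + k)! := by
  induction k with
  | zero => simp
  | succ k ih =>
    rw [Finset.prod_range_succ, ← mul_assoc, ih]
    rw [show n + (k + 1) = (n + k) + 1 from rfl, Nat.factorial_succ]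
    ring

lemma beta_nat (n : ℕ) :
    ∫ x in (0:ℝ)..1, x ^ n * (1 - x) ^ n = (n ! * n ! : ℝ) / (2 * n + 1)! := by
  have hu : 0 < Complex.re ((n : ℂ) + 1) := by simp; positivity
  have h := Complex.betaIntegral_eval_nat_add_one_right hu n
  have hprod : (∏ j ∈ Finset.range (n + 1), ((n : ℂ) + 1 + j))
      = ((∏ j ∈ Finset.range (n + 1), (n + 1 + j) : ℕ) : ℂ) := by
    push_cast
    ring_nf
  have hP : n ! * ∏ j ∈ Finset.range (n + 1), (n + 1 + j) = (2 * n + 1)! := by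
    rw [prod_fact]
    congr 1
    omega
  have hInt : Complex.betaIntegral ((n : ℂ) + 1) ((n : ℂ) + 1)
      = ((∫ x in (0:ℝ)..1, x ^ n * (1 - x) ^ n : ℝ) : ℂ) := by
    rw [Complex.betaIntegral, ← intervalIntegral.integral_ofReal]
    apply intervalIntegral.integral_congr
    intro x _
    show (x : ℂ) ^ ((n : ℂ) + 1 - 1) * ((1 : ℂ) - x) ^ ((n : ℂ) + 1 - 1)
        = ((x ^ n * (1 - x) ^ n : ℝ) : ℂ)
    rw [show (n : ℂ) + 1 - 1 = (n : ℂ) by ring, Complex.cpow_natCast, Complex.cpow_natCast]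
    push_cast
    ring
  rw [hInt, hprod] at h
  have hne : ((∏ j ∈ Finset.range (n + 1), (n + 1 + j) : ℕ) : ℂ) ≠ 0 := by
    rw [Nat.cast_ne_zero]
    exact Finset.prod_ne_zero_iff.2 fun j _ => by omega
  have hfne : (((2 * n + 1)! : ℕ) : ℂ) ≠ 0 := Nat.cast_ne_zero.2 (Nat.factorial_ne_zero _)
  have hC : ((∫ x in (0:ℝ)..1, x ^ n * (1 - x) ^ n : ℝ) : ℂ)
      = ((n ! : ℕ) : ℂ) * ((n ! : ℕ) : ℂ) / (((2 * n + 1)! : ℕ) : ℂ) := by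
    rw [h, div_eq_div_iff hne hfne]
    norm_cast
    rw [← hP]
    ring
  rw [← Complex.ofReal_inj]
  rw [hC]
  push_cast
  ring

lemma integral_one_sub_sq_pow (n : ℕ) :
    ∫ x in (-1:ℝ)..1, (1 - x ^ 2) ^ n = 2 * 4 ^ n * (n ! * n ! : ℝ) / (2 * n + 1)! := by
  have h := intervalIntegral.integral_comp_mul_add (a := 0) (b := 1)
    (f := fun y : ℝ => (1 - y ^ 2) ^ n) (two_ne_zero) (-1)
  have h2 : (∫ x in (0:ℝ)..1, (1 - (2 * x + -1) ^ 2) ^ n)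
      = 4 ^ n * ∫ x in (0:ℝ)..1, x ^ n * (1 - x) ^ n := by
    rw [← intervalIntegral.integral_const_mul]
    apply intervalIntegral.integral_congr
    intro x _
    show ((1 : ℝ) - (2 * x + -1) ^ 2) ^ n = 4 ^ n * (x ^ n * (1 - x) ^ n)
    rw [show (1 : ℝ) - (2 * x + -1) ^ 2 = 4 * (x * (1 - x)) by ring, mul_pow, mul_pow]
  rw [h2] at h
  rw [show (2:ℝ) * 0 + -1 = -1 by norm_num, show (2:ℝ) * 1 + -1 = 1 by norm_num] at h
  rw [beta_nat] at h
  rw [smul_eq_mul] at h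
  have h3 : (∫ x in (-1:ℝ)..1, (1 - x ^ 2) ^ n)
      = 2 * (4 ^ n * ((n ! * n ! : ℝ) / (2 * n + 1)!)) := by
    rw [h]; ring
  rw [h3]; ring

/-- Theorem 6 of the paper: for every `m ≥ 0` and `|z| < 1`,
`∑_{n=0}^∞ 4^n n^m z^n/((2n+1)·C_n) = ∫_{-1}^1 Q_m(1-x², z)/(1-z(1-x²))^{m+2} dx`. -/
theorem g_m_integral_rep (m : ℕ) (z : ℝ) (hz : |z| < 1) :
    ∑' n : ℕ, 4 ^ n * (n : ℝ) ^ m * z ^ n / ((2 * (n : ℝ) + 1) * (catalan n : ℝ))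
      = ∫ x in (-1 : ℝ)..1,
          (catalanQ (1 - x ^ 2) m).eval z / (1 - z * (1 - x ^ 2)) ^ (m + 2) := by
  set f : ℕ → ℝ → ℝ := fun n x => ((n : ℝ) + 1) * (n : ℝ) ^ m * (z * (1 - x ^ 2)) ^ n / 2
    with hf_def
  have hx_facts : ∀ x ∈ Set.Ioc (-1 : ℝ) 1, 0 ≤ 1 - x ^ 2 ∧ 1 - x ^ 2 ≤ 1 := by
    intro x hx
    obtain ⟨h1, h2⟩ := hx
    constructor <;> nlinarith
  have hcont : ∀ n : ℕ, Continuous (f n) := by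
    intro n
    rw [hf_def]
    fun_prop
  have hint : ∀ n : ℕ, IntegrableOn (f n) (Set.Ioc (-1 : ℝ) 1) :=
    fun n => (hcont n).integrableOn_Ioc
  -- per-n identity
  have hper : ∀ n : ℕ,
      4 ^ n * (n : ℝ) ^ m * z ^ n / ((2 * (n : ℝ) + 1) * (catalan n : ℝ))
        = ∫ x in Set.Ioc (-1 : ℝ) 1, f n x := by
    intro n
    have hc : ∀ x : ℝ, f n x
        = (((n : ℝ) + 1) * (n : ℝ) ^ m * z ^ n / 2) * (1 - x ^ 2) ^ n := by
      intro x
      rw [hf_def]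
      simp only [mul_pow]
      ring
    have h1 : (∫ x in Set.Ioc (-1 : ℝ) 1, f n x)
        = (((n : ℝ) + 1) * (n : ℝ) ^ m * z ^ n / 2)
            * ∫ x in Set.Ioc (-1 : ℝ) 1, (1 - x ^ 2) ^ n := by
      rw [← integral_const_mul]
      exact setIntegral_congr_fun measurableSet_Ioc fun x _ => hc x
    have h2 : (∫ x in Set.Ioc (-1 : ℝ) 1, (1 - x ^ 2) ^ n)
        = 2 * 4 ^ n * (n ! * n ! : ℝ) / (2 * n + 1)! := by
      rw [← intervalIntegral.integral_of_le (by norm_num : (-1:ℝ) ≤ 1)]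
      exact integral_one_sub_sq_pow n
    rw [h1, h2]
    -- arithmetic identity
    have keyNat : (2 * n + 1)! = (2 * n + 1) * ((n + 1) * catalan n) * (n ! * n !) := by
      have h3 : (2 * n).choose n * (n ! * n !) = (2 * n)! := by
        have := Nat.choose_mul_factorial_mul_factorial (show n ≤ 2 * n by omega)
        rw [show 2 * n - n = n by omega] at this
        rw [← mul_assoc]
        exact this
      rw [show (2 * n + 1)! = (2 * n + 1) * (2 * n)! from Nat.factorial_succ _]
      rw [succ_mul_catalan_eq_centralBinom, Nat.centralBinom, mul_assoc, h3]
    have keyR : ((2 * n + 1)! : ℝ)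
        = (2 * (n : ℝ) + 1) * (((n : ℝ) + 1) * (catalan n : ℝ)) * ((n ! : ℝ) * (n ! : ℝ)) := by
      exact_mod_cast congrArg (Nat.cast (R := ℝ)) keyNat
    have hcatpos : 0 < catalan n := by
      have h5 := Nat.centralBinom_pos n
      rw [← succ_mul_catalan_eq_centralBinom] at h5
      exact Nat.pos_of_ne_zero fun h => by simp [h] at h5
    have hcat0 : (catalan n : ℝ) ≠ 0 := by exact_mod_cast hcatpos.ne'
    have hfac0 : (n ! : ℝ) ≠ 0 := by exact_mod_cast (Nat.factorial_pos n).ne'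
    have h2n1 : (2 * (n : ℝ) + 1) ≠ 0 := by positivity
    rw [keyR]
    field_simp
  -- summability of the integrals of norms
  have habs : Summable (fun n : ℕ => ((n : ℝ) + 1) * (n : ℝ) ^ m * |z| ^ n) :=
    (hasSum_aux m |z| (by rwa [abs_abs])).summable
  have hbound : ∀ n : ℕ, (∫ x in Set.Ioc (-1 : ℝ) 1, ‖f n x‖)
      ≤ ((n : ℝ) + 1) * (n : ℝ) ^ m * |z| ^ n := by
    intro n
    have hpt : ∀ x ∈ Set.Ioc (-1 : ℝ) 1,
        ‖f n x‖ ≤ ((n : ℝ) + 1) * (n : ℝ) ^ m * |z| ^ n / 2 := by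
      intro x hx
      obtain ⟨ha, hb⟩ := hx_facts x hx
      rw [hf_def, Real.norm_eq_abs, abs_div, abs_mul, abs_mul, abs_pow]
      have e1 : |(n : ℝ) + 1| = (n : ℝ) + 1 := abs_of_nonneg (by positivity)
      have e3 : |(2 : ℝ)| = 2 := by norm_num
      rw [e1, Nat.abs_cast, e3]
      gcongr
      rw [abs_pow]
      apply pow_le_pow_left₀ (abs_nonneg _)
      rw [abs_mul]
      calc |z| * |1 - x ^ 2| ≤ |z| * 1 := by
            gcongr
            rw [abs_of_nonneg ha]
            exact hb
        _ = |z| := mul_one _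
    calc (∫ x in Set.Ioc (-1 : ℝ) 1, ‖f n x‖)
        ≤ ∫ _x in Set.Ioc (-1 : ℝ) 1, (((n : ℝ) + 1) * (n : ℝ) ^ m * |z| ^ n / 2) :=
          setIntegral_mono_on (hint n).norm
            (integrableOn_const measure_Ioc_lt_top.ne) measurableSet_Ioc hpt
      _ = ((n : ℝ) + 1) * (n : ℝ) ^ m * |z| ^ n := by
          rw [setIntegral_const, smul_eq_mul, Real.volume_real_Ioc_of_le (by norm_num : (-1:ℝ) ≤ 1)]
          ring
  have hF_sum : Summable fun n : ℕ => ∫ x in Set.Ioc (-1 : ℝ) 1, ‖f n x‖ :=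
    Summable.of_nonneg_of_le (fun n => integral_nonneg fun x => norm_nonneg _) hbound habs
  have hswap := MeasureTheory.integral_tsum_of_summable_integral_norm hint hF_sum
  -- pointwise sum identity
  have hpt_sum : ∀ x ∈ Set.Ioc (-1 : ℝ) 1,
      (∑' n : ℕ, f n x)
        = eval z (catalanQ (1 - x ^ 2) m) / (1 - z * (1 - x ^ 2)) ^ (m + 2) := by
    intro x hx
    obtain ⟨ha, hb⟩ := hx_facts x hx
    have hw : |z * (1 - x ^ 2)| < 1 := by
      rw [abs_mul]
      calc |z| * |1 - x ^ 2| ≤ |z| * 1 := by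
            gcongr
            rw [abs_of_nonneg ha]; exact hb
        _ = |z| := mul_one _
        _ < 1 := hz
    have h := (hasSum_aux m (z * (1 - x ^ 2)) hw).div_const 2
    have ht := h.tsum_eq
    rw [hf_def]
    simp only at ht ⊢
    rw [ht, show eval z (catalanQ (1 - x ^ 2) m) = eval ((1 - x ^ 2) * z) (catalanQ 1 m)
      from eval_catalanQ _ _ _, mul_comm (1 - x ^ 2) z]
    have hne : (1 - z * (1 - x ^ 2)) ^ (m + 2) ≠ 0 := by
      apply pow_ne_zero
      have : z * (1 - x ^ 2) < 1 := lt_of_le_of_lt (le_abs_self _) hw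
      linarith
    field_simp
  rw [intervalIntegral.integral_of_le (by norm_num : (-1:ℝ) ≤ 1)]
  calc ∑' n : ℕ, 4 ^ n * (n : ℝ) ^ m * z ^ n / ((2 * (n : ℝ) + 1) * (catalan n : ℝ))
      = ∑' n : ℕ, ∫ x in Set.Ioc (-1 : ℝ) 1, f n x := tsum_congr hper
    _ = ∫ x in Set.Ioc (-1 : ℝ) 1, ∑' n : ℕ, f n x := hswap
    _ = ∫ x in Set.Ioc (-1 : ℝ) 1,
          eval z (catalanQ (1 - x ^ 2) m) / (1 - z * (1 - x ^ 2)) ^ (m + 2) :=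
        setIntegral_congr_fun measurableSet_Ioc hpt_sum
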